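/- Let f : ℝ² → ℝ, f(x,y) = x + x²y. Then f has no critical points (Sing f = ∅), yet f is not a locally trivial fibration over any neighborhood of 0: the value 0 is a bifurcation value at infinity of f. Concretely, for t ≠ 0 the fiber f⁻¹(t) has a different number of connected components than f⁻¹(0). -/

import Mathlib

open Filter Topology Set

noncomputable section

/-- `f(x,y) = x + x²y`. -/
def fBroughton (p : ℝ × ℝ) : ℝ := p.1 + p.1 ^ 2 * p.2

/- ## Auxiliary material -/

lemma card_components {X : Type*} [TopologicalSpace X] {n : ℕ} (g : X → Fin n)
    (hg : Continuous g) (hsurj : Function.Surjective g)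
    (hconn : ∀ i, IsPreconnected {x | g x = i}) :
    Nat.card (ConnectedComponents X) = n := by
  have hb : Function.Bijective hg.connectedComponentsLift := by
    constructor
    · intro a b hab
      obtain ⟨p, rfl⟩ := ConnectedComponents.surjective_coe a
      obtain ⟨q, rfl⟩ := ConnectedComponents.surjective_coe b
      simp only [Continuous.connectedComponentsLift_apply_coe] at hab
      have hp : p ∈ {x | g x = g q} := hab
      have hq : q ∈ {x | g x = g q} := rfl
      have := (hconn (g q)).subset_connectedComponent hq hp
      exact (ConnectedComponents.coe_eq_coe').mpr this |>.symm ▸ rfl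
    · intro i
      obtain ⟨x, rfl⟩ := hsurj i
      exact ⟨x, hg.connectedComponentsLift_apply_coe x⟩
  rw [Nat.card_congr (Equiv.ofBijective _ hb), Nat.card_eq_fintype_card, Fintype.card_fin]

lemma mem_fiber {t : ℝ} (p : ℝ × ℝ) : p ∈ fBroughton ⁻¹' {t} ↔ p.1 + p.1 ^ 2 * p.2 = t := by
  simp [fBroughton]

/- ### The fiber over 0 -/

abbrev X0 := ↥(fBroughton ⁻¹' {(0 : ℝ)})

lemma hyp_of_ne (p : X0) (h : p.1.1 ≠ 0) : p.1.2 * p.1.1 = -1 := by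
  have hp : p.1.1 + p.1.1 ^ 2 * p.1.2 = 0 := (mem_fiber p.1).1 p.2
  have h2 : p.1.1 * (p.1.2 * p.1.1 + 1) = 0 := by linear_combination hp
  rcases mul_eq_zero.1 h2 with h3 | h3
  · exact absurd h3 h
  · linarith

def g0 : X0 → Fin 3 := fun p => if p.1.1 < 0 then 0 else if p.1.1 = 0 then 1 else 2

lemma g0_fiber0 : {p : X0 | g0 p = 0} = {p : X0 | p.1.1 < 0} := by
  ext p
  simp only [g0, mem_setOf_eq]
  rcases lt_trichotomy p.1.1 0 with h | h | h <;>
    simp [h, not_lt_of_gt, ne_of_gt, asymm]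

lemma g0_fiber1 : {p : X0 | g0 p = 1} = {p : X0 | p.1.1 = 0} := by
  ext p
  simp only [g0, mem_setOf_eq]
  rcases lt_trichotomy p.1.1 0 with h | h | h <;>
    simp [h, not_lt_of_gt, ne_of_lt, ne_of_gt, lt_irrefl, asymm]

lemma g0_fiber2 : {p : X0 | g0 p = 2} = {p : X0 | 0 < p.1.1} := by
  ext p
  simp only [g0, mem_setOf_eq]
  rcases lt_trichotomy p.1.1 0 with h | h | h <;>
    simp [h, not_lt_of_gt, ne_of_lt, ne_of_gt, lt_irrefl, asymm]

lemma cont_val0 : Continuous (fun p : X0 => p.1.1) :=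
  (continuous_subtype_val.fst)

lemma isOpen_B0 : IsOpen {p : X0 | p.1.1 = 0} := by
  have hE : {p : X0 | p.1.1 = 0} = {p : X0 | p.1.2 * p.1.1 = -1}ᶜ := by
    ext p
    simp only [mem_setOf_eq, mem_compl_iff]
    constructor
    · intro h hc
      rw [h] at hc
      norm_num at hc
    · intro h
      by_contra hne
      exact h (hyp_of_ne p hne)
  rw [hE]
  exact (isClosed_eq ((continuous_subtype_val.snd).mul (continuous_subtype_val.fst))
    continuous_const).isOpen_compl

lemma g0_continuous : Continuous g0 := by
  apply IsLocallyConstant.continuous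
  rw [IsLocallyConstant.iff_isOpen_fiber]
  intro y
  fin_cases y
  · show IsOpen (g0 ⁻¹' {0})
    have : g0 ⁻¹' {0} = {p : X0 | p.1.1 < 0} := g0_fiber0
    rw [this]
    exact isOpen_Iio.preimage cont_val0
  · show IsOpen (g0 ⁻¹' {1})
    have : g0 ⁻¹' {1} = {p : X0 | p.1.1 = 0} := g0_fiber1
    rw [this]
    exact isOpen_B0
  · show IsOpen (g0 ⁻¹' {2})
    have : g0 ⁻¹' {2} = {p : X0 | 0 < p.1.1} := g0_fiber2
    rw [this]
    exact isOpen_Ioi.preimage cont_val0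

/-- The vertical line `x = 0` inside the zero fiber. -/
def line0 : ℝ → X0 := fun y => ⟨(0, y), by simp [fBroughton]⟩

lemma line0_range : range line0 = {p : X0 | p.1.1 = 0} := by
  ext p
  constructor
  · rintro ⟨y, rfl⟩; exact rfl
  · intro h
    refine ⟨p.1.2, ?_⟩
    apply Subtype.ext
    apply Prod.ext
    · exact h.symm
    · rfl

/-- Parametrization of the hyperbola branches. -/
def hyp0 (x : {x : ℝ // x ≠ 0}) : X0 :=
  ⟨(x.1, -1 / x.1), by
    have hx := x.2
    rw [mem_fiber]
    field_simp
    ring⟩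

lemma hyp0_cont : Continuous hyp0 := by
  apply Continuous.subtype_mk
  exact continuous_subtype_val.prodMk
    (continuous_const.div continuous_subtype_val fun x => x.2)

lemma mem_hyp0 (p : X0) (h : p.1.1 ≠ 0) : p = hyp0 ⟨p.1.1, h⟩ := by
  apply Subtype.ext
  apply Prod.ext
  · rfl
  · show p.1.2 = -1 / p.1.1
    rw [eq_div_iff h]
    exact hyp_of_ne p h

lemma conn_A0 : IsPreconnected {p : X0 | p.1.1 < 0} := by
  have hE : {p : X0 | p.1.1 < 0} =
      (fun x : Iio (0:ℝ) => hyp0 ⟨x.1, ne_of_lt x.2⟩) '' univ := by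
    ext p
    constructor
    · intro h
      exact ⟨⟨p.1.1, h⟩, mem_univ _, (mem_hyp0 p (ne_of_lt h)).symm⟩
    · rintro ⟨x, -, rfl⟩
      exact x.2
  rw [hE]
  haveI : PreconnectedSpace ↥(Iio (0:ℝ)) := Subtype.preconnectedSpace isPreconnected_Iio
  rw [image_univ]
  exact isPreconnected_range (hyp0_cont.comp (by continuity))

lemma conn_C0 : IsPreconnected {p : X0 | 0 < p.1.1} := by
  have hE : {p : X0 | 0 < p.1.1} =
      (fun x : Ioi (0:ℝ) => hyp0 ⟨x.1, ne_of_gt x.2⟩) '' univ := by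
    ext p
    constructor
    · intro h
      exact ⟨⟨p.1.1, h⟩, mem_univ _, (mem_hyp0 p (ne_of_gt h)).symm⟩
    · rintro ⟨x, -, rfl⟩
      exact x.2
  rw [hE]
  haveI : PreconnectedSpace ↥(Ioi (0:ℝ)) := Subtype.preconnectedSpace isPreconnected_Ioi
  rw [image_univ]
  exact isPreconnected_range (hyp0_cont.comp (by continuity))

lemma conn_B0 : IsPreconnected {p : X0 | p.1.1 = 0} := by
  rw [← line0_range]
  exact isPreconnected_range (by
    apply Continuous.subtype_mk
    exact continuous_const.prodMk continuous_id)

lemma card0 : Nat.card (ConnectedComponents (fBroughton ⁻¹' {(0 : ℝ)})) = 3 := by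
  apply card_components g0 g0_continuous
  · intro i
    fin_cases i
    · exact ⟨hyp0 ⟨-1, by norm_num⟩, by
        have : (hyp0 ⟨-1, by norm_num⟩).1.1 < 0 := by norm_num [hyp0]
        have h := g0_fiber0
        rw [Set.ext_iff] at h
        exact (h _).2 this⟩
    · exact ⟨line0 0, by
        have h := g0_fiber1
        rw [Set.ext_iff] at h
        exact (h _).2 rfl⟩
    · exact ⟨hyp0 ⟨1, by norm_num⟩, by
        have : (0:ℝ) < (hyp0 ⟨1, by norm_num⟩).1.1 := by norm_num [hyp0]
        have h := g0_fiber2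
        rw [Set.ext_iff] at h
        exact (h _).2 this⟩
  · intro i
    fin_cases i
    · show IsPreconnected {x : X0 | g0 x = 0}
      rw [g0_fiber0]; exact conn_A0
    · show IsPreconnected {x : X0 | g0 x = 1}
      rw [g0_fiber1]; exact conn_B0
    · show IsPreconnected {x : X0 | g0 x = 2}
      rw [g0_fiber2]; exact conn_C0

/- ### The fiber over t ≠ 0 -/

section T
variable (t : ℝ)

abbrev Xt := ↥(fBroughton ⁻¹' {t})

lemma ne_zero_of_mem {t : ℝ} (ht : t ≠ 0) (p : Xt t) : p.1.1 ≠ 0 := by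
  intro h
  have hp : p.1.1 + p.1.1 ^ 2 * p.1.2 = t := (mem_fiber p.1).1 p.2
  rw [h] at hp
  norm_num at hp
  exact ht hp.symm

def gt' : Xt t → Fin 2 := fun p => if p.1.1 < 0 then 0 else 1

lemma gt_fiber0 : {p : Xt t | gt' t p = 0} = {p : Xt t | p.1.1 < 0} := by
  ext p
  simp only [gt', mem_setOf_eq]
  split_ifs with h <;> simp [h]

lemma gt_fiber1 {t : ℝ} (ht : t ≠ 0) :
    {p : Xt t | gt' t p = 1} = {p : Xt t | 0 < p.1.1} := by
  ext p
  have hne := ne_zero_of_mem ht p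
  simp only [gt', mem_setOf_eq]
  split_ifs with h
  · constructor
    · intro hc; exact absurd hc (by decide)
    · intro hc; exact (asymm h hc).elim
  · constructor
    · intro _; exact lt_of_le_of_ne (not_lt.1 h) (Ne.symm hne)
    · intro _; rfl

lemma gt_continuous {t : ℝ} (ht : t ≠ 0) : Continuous (gt' t) := by
  apply IsLocallyConstant.continuous
  rw [IsLocallyConstant.iff_isOpen_fiber]
  intro y
  fin_cases y
  · show IsOpen (gt' t ⁻¹' {0})
    have : gt' t ⁻¹' {0} = {p : Xt t | p.1.1 < 0} := gt_fiber0 t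
    rw [this]
    exact isOpen_Iio.preimage (continuous_subtype_val.fst)
  · show IsOpen (gt' t ⁻¹' {1})
    have : gt' t ⁻¹' {1} = {p : Xt t | 0 < p.1.1} := gt_fiber1 ht
    rw [this]
    exact isOpen_Ioi.preimage (continuous_subtype_val.fst)

/-- Parametrization of the t-fiber over `x ≠ 0`. -/
def paramT (t : ℝ) (x : {x : ℝ // x ≠ 0}) : Xt t :=
  ⟨(x.1, (t - x.1) / x.1 ^ 2), by
    have hx := x.2
    rw [mem_fiber]
    field_simp
    ring⟩

lemma paramT_cont : Continuous (paramT t) := by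
  apply Continuous.subtype_mk
  exact continuous_subtype_val.prodMk
    ((continuous_const.sub continuous_subtype_val).div
      (continuous_subtype_val.pow 2) fun x => pow_ne_zero 2 x.2)

lemma mem_paramT {t : ℝ} (p : Xt t) (h : p.1.1 ≠ 0) : p = paramT t ⟨p.1.1, h⟩ := by
  have hp : p.1.1 + p.1.1 ^ 2 * p.1.2 = t := (mem_fiber p.1).1 p.2
  apply Subtype.ext
  apply Prod.ext
  · rfl
  · show p.1.2 = (t - p.1.1) / p.1.1 ^ 2
    rw [eq_div_iff (pow_ne_zero 2 h)]
    linear_combination hp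

lemma conn_At {t : ℝ} : IsPreconnected {p : Xt t | p.1.1 < 0} := by
  have hE : {p : Xt t | p.1.1 < 0} =
      range (fun x : Iio (0:ℝ) => paramT t ⟨x.1, ne_of_lt x.2⟩) := by
    ext p
    constructor
    · intro h
      exact ⟨⟨p.1.1, h⟩, (mem_paramT p (ne_of_lt h)).symm⟩
    · rintro ⟨x, rfl⟩
      exact x.2
  rw [hE]
  haveI : PreconnectedSpace ↥(Iio (0:ℝ)) := Subtype.preconnectedSpace isPreconnected_Iio
  exact isPreconnected_range ((paramT_cont t).comp (by continuity))

lemma conn_Ct {t : ℝ} : IsPreconnected {p : Xt t | 0 < p.1.1} := by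
  have hE : {p : Xt t | 0 < p.1.1} =
      range (fun x : Ioi (0:ℝ) => paramT t ⟨x.1, ne_of_gt x.2⟩) := by
    ext p
    constructor
    · intro h
      exact ⟨⟨p.1.1, h⟩, (mem_paramT p (ne_of_gt h)).symm⟩
    · rintro ⟨x, rfl⟩
      exact x.2
  rw [hE]
  haveI : PreconnectedSpace ↥(Ioi (0:ℝ)) := Subtype.preconnectedSpace isPreconnected_Ioi
  exact isPreconnected_range ((paramT_cont t).comp (by continuity))

lemma cardT {t : ℝ} (ht : t ≠ 0) :
    Nat.card (ConnectedComponents (fBroughton ⁻¹' {t})) = 2 := by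
  apply card_components (gt' t) (gt_continuous ht)
  · intro i
    fin_cases i
    · refine ⟨paramT t ⟨-1, by norm_num⟩, ?_⟩
      show gt' t _ = 0
      have h0 : (paramT t ⟨-1, by norm_num⟩).1.1 < 0 := by norm_num [paramT]
      have h := gt_fiber0 t
      rw [Set.ext_iff] at h
      exact (h _).2 h0
    · refine ⟨paramT t ⟨1, by norm_num⟩, ?_⟩
      show gt' t _ = 1
      have h0 : (0:ℝ) < (paramT t ⟨1, by norm_num⟩).1.1 := by norm_num [paramT]
      have h := gt_fiber1 ht
      rw [Set.ext_iff] at h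
      exact (h _).2 h0
  · intro i
    fin_cases i
    · show IsPreconnected {x : Xt t | gt' t x = 0}
      rw [gt_fiber0]; exact conn_At
    · show IsPreconnected {x : Xt t | gt' t x = 1}
      rw [gt_fiber1 ht]; exact conn_Ct

end T

/- ### No critical points -/

lemma no_crit (p : ℝ × ℝ) : fderiv ℝ fBroughton p ≠ 0 := by
  have hf : HasFDerivAt (fun q : ℝ × ℝ => q.1) (ContinuousLinearMap.fst ℝ ℝ ℝ) p :=
    hasFDerivAt_fst
  have hs : HasFDerivAt (fun q : ℝ × ℝ => q.2) (ContinuousLinearMap.snd ℝ ℝ ℝ) p :=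
    hasFDerivAt_snd
  have hsq : HasFDerivAt (fun q : ℝ × ℝ => q.1 ^ 2)
      (p.1 • ContinuousLinearMap.fst ℝ ℝ ℝ + p.1 • ContinuousLinearMap.fst ℝ ℝ ℝ) p := by
    simpa [pow_two] using hf.fun_mul hf
  have hD : HasFDerivAt fBroughton
      (ContinuousLinearMap.fst ℝ ℝ ℝ +
        (p.1 ^ 2 • ContinuousLinearMap.snd ℝ ℝ ℝ +
          p.2 • (p.1 • ContinuousLinearMap.fst ℝ ℝ ℝ + p.1 • ContinuousLinearMap.fst ℝ ℝ ℝ))) p := by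
    exact hf.add (hsq.mul hs)
  intro hzero
  rw [hD.fderiv] at hzero
  have h01 := congrArg (fun L : (ℝ × ℝ) →L[ℝ] ℝ => L (0, 1)) hzero
  have h10 := congrArg (fun L : (ℝ × ℝ) →L[ℝ] ℝ => L (1, 0)) hzero
  simp only [ContinuousLinearMap.add_apply, ContinuousLinearMap.smul_apply,
    ContinuousLinearMap.coe_fst', ContinuousLinearMap.coe_snd',
    ContinuousLinearMap.zero_apply, smul_eq_mul, mul_one, mul_zero, add_zero, zero_add] at h01 h10
  have hx : p.1 = 0 := by nlinarith [h01]
  rw [hx] at h10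
  norm_num at h10

/-- For `f(x,y) = x + x²y`: `f` has no critical points (`Sing f = ∅`), yet `0` is a
bifurcation value at infinity: concretely, `f⁻¹(0)` has `3` connected components while
`f⁻¹(t)` has `2` connected components for every `t ≠ 0`, so `f` is not a locally trivial
fibration over any neighborhood of `0`. -/
theorem broughton_example :
    (∀ p : ℝ × ℝ, fderiv ℝ fBroughton p ≠ 0) ∧
    Nat.card (ConnectedComponents (fBroughton ⁻¹' {(0 : ℝ)})) = 3 ∧
    (∀ t : ℝ, t ≠ 0 → Nat.card (ConnectedComponents (fBroughton ⁻¹' {t})) = 2) := by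
  exact ⟨no_crit, card0, fun t ht => cardT ht⟩
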